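/- Let (E, d) be a metric space, P a probability measure on E, H a metric space, η ∈ H, and m : H × E → [-∞, ∞) a measurable function such that for P-almost every z, the map η' ↦ m(η', z) is upper semicontinuous at η. Write m_B(z) = sup_{η' ∈ B} m(η', z). If ∫ m_{B̄(η,δ₀)} dP < ∞ for some δ₀ > 0 (where B̄(η,δ₀) is the closed ball of radius δ₀), then lim_{δ ↓ 0} ∫ m_{B(η,δ)} dP = ∫ m_η dP, where B(η,δ) is the open ball of radius δ. -/

import Mathlib

open MeasureTheory Filter Topology

/-- The upper part of an extended-real number, as an `ℝ≥0∞`. -/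
noncomputable def erealPosPart (x : EReal) : ENNReal :=
  if x = ⊤ then ⊤ else ENNReal.ofReal x.toReal

/-- Extended-real integral `∫ f⁺ − ∫ f⁻` (values in `EReal`). -/
noncomputable def erealIntegral {E : Type*} [MeasurableSpace E]
    (P : Measure E) (f : E → EReal) : EReal :=
  ((∫⁻ z, erealPosPart (f z) ∂P : ENNReal) : EReal)
    - ((∫⁻ z, erealPosPart (-(f z)) ∂P : ENNReal) : EReal)

lemma pp_top : erealPosPart ⊤ = ⊤ := if_pos rfl

lemma pp_bot : erealPosPart ⊥ = 0 := by simp [erealPosPart]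

lemma pp_coe (r : ℝ) : erealPosPart r = ENNReal.ofReal r := by
  simp [erealPosPart, EReal.coe_ne_top]

lemma pp_gc : GaloisConnection erealPosPart ((↑) : ENNReal → EReal) := by
  intro x y
  induction x using EReal.rec with
  | bot => simp [pp_bot]
  | top =>
      rw [pp_top]
      simp [top_le_iff, EReal.coe_ennreal_eq_top_iff]
  | coe r =>
      rcases eq_or_ne y ⊤ with hy | hy
      · subst hy
        simp [pp_coe, EReal.coe_ennreal_top, (EReal.coe_lt_top r).le]
      · rw [pp_coe, ENNReal.ofReal_le_iff_le_toReal hy]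
        have hyy : (y : EReal) = ((y.toReal : ℝ) : EReal) := by
          rw [← EReal.toReal_coe_ennreal (x := y)]
          exact (EReal.coe_toReal (by simpa [EReal.coe_ennreal_eq_top_iff] using hy)
            (EReal.coe_ennreal_ne_bot y)).symm
        rw [hyy, EReal.coe_le_coe_iff]

lemma pp_mono : Monotone erealPosPart := pp_gc.monotone_l

lemma pp_coe_ennreal (y : ENNReal) : erealPosPart (y : EReal) = y := by
  rcases eq_or_ne y ⊤ with hy | hy
  · subst hy; rw [EReal.coe_ennreal_top, pp_top]
  · rw [erealPosPart, if_neg (by simpa [EReal.coe_ennreal_eq_top_iff] using hy),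
      EReal.toReal_coe_ennreal, ENNReal.ofReal_toReal hy]

lemma pp_coe_back {x : EReal} (hx : 0 ≤ x) : ((erealPosPart x : ENNReal) : EReal) = x := by
  induction x using EReal.rec with
  | bot => exact absurd hx (by simp)
  | top => rw [pp_top, EReal.coe_ennreal_top]
  | coe r =>
      rw [pp_coe, EReal.coe_ennreal_ofReal, max_eq_left (by exact_mod_cast hx)]

lemma pp_nonpos {x : EReal} (hx : x ≤ 0) : erealPosPart x = 0 := by
  have := pp_mono hx
  simpa [show erealPosPart 0 = 0 by simpa using pp_coe 0] using this

lemma pp_iSup {ι : Sort*} (f : ι → EReal) :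
    erealPosPart (⨆ i, f i) = ⨆ i, erealPosPart (f i) := pp_gc.l_iSup

lemma pp_iInf {ι : Sort*} [Nonempty ι] (f : ι → EReal) :
    erealPosPart (⨅ i, f i) = ⨅ i, erealPosPart (f i) := by
  refine le_antisymm (le_iInf fun i => pp_mono (iInf_le f i)) ?_
  rcases lt_or_ge (⨅ i, f i) 0 with h | h
  · obtain ⟨i, hi⟩ := iInf_lt_iff.1 h
    rw [pp_nonpos h.le]
    exact le_trans (iInf_le _ i) (le_of_eq (pp_nonpos hi.le))
  · set c : ENNReal := ⨅ i, erealPosPart (f i) with hc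
    have hcle : (c : EReal) ≤ ⨅ i, f i := by
      refine le_iInf fun i => ?_
      have h1 : (c : EReal) ≤ ((erealPosPart (f i) : ENNReal) : EReal) :=
        EReal.coe_ennreal_le_coe_ennreal_iff.2 (iInf_le _ i)
      rwa [pp_coe_back (le_trans h (iInf_le f i))] at h1
    calc c = erealPosPart ((c : ENNReal) : EReal) := (pp_coe_ennreal c).symm
      _ ≤ erealPosPart (⨅ i, f i) := pp_mono hcle

lemma pp_meas : Measurable erealPosPart := by
  unfold erealPosPart
  exact Measurable.ite (measurableSet_eq) measurable_const
    (ENNReal.measurable_ofReal.comp measurable_ereal_toReal)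

lemma ereal_iSup_neg {ι : Sort*} (f : ι → EReal) : (⨆ i, -(f i)) = -(⨅ i, f i) := by
  refine le_antisymm (iSup_le fun i => EReal.neg_le_neg_iff.2 (iInf_le f i)) ?_
  rw [EReal.neg_le]
  exact le_iInf fun i => by
    rw [EReal.neg_le]
    exact le_iSup (fun i => -(f i)) i

/-- Convergence of the integrals of suprema over shrinking balls
to the integral of `m η`, for a criterion function with values in `[-∞,∞)` that is
`P`-a.e. upper semicontinuous at `η`, provided the supremum over some closed ball
has integral `< ∞`. -/
theorem ereal_integral_sup_shrinking_balls
    {E H : Type*} [MetricSpace E] [MeasurableSpace E] [BorelSpace E] [MetricSpace H]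
    (P : Measure E) [IsProbabilityMeasure P]
    (η : H) (m : H → E → EReal)
    (hlt : ∀ η' z, m η' z < ⊤)
    (hmeas : ∀ δ : ℝ, 0 < δ → Measurable (fun z => ⨆ η' ∈ Metric.ball η δ, m η' z))
    (hmeasη : Measurable (fun z => m η z))
    (husc : ∀ᵐ z ∂P, UpperSemicontinuousAt (fun η' => m η' z) η)
    (δ₀ : ℝ) (hδ₀ : 0 < δ₀)
    (hint : erealIntegral P (fun z => ⨆ η' ∈ Metric.closedBall η δ₀, m η' z) < ⊤) :
    Tendsto (fun δ : ℝ => erealIntegral P (fun z => ⨆ η' ∈ Metric.ball η δ, m η' z))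
      (nhdsWithin 0 (Set.Ioi 0)) (𝓝 (erealIntegral P (fun z => m η z))) := by
  classical
  set F : ℝ → E → EReal := fun δ z => ⨆ η' ∈ Metric.ball η δ, m η' z with hF
  set Fc : E → EReal := fun z => ⨆ η' ∈ Metric.closedBall η δ₀, m η' z with hFcdef
  set a : ℝ → ENNReal := fun δ => ∫⁻ z, erealPosPart (F δ z) ∂P with hadef
  set b : ℝ → ENNReal := fun δ => ∫⁻ z, erealPosPart (-(F δ z)) ∂P with hbdef
  set A : ENNReal := ∫⁻ z, erealPosPart (m η z) ∂P with hAdef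
  set B : ENNReal := ∫⁻ z, erealPosPart (-(m η z)) ∂P with hBdef
  set ac : ENNReal := ∫⁻ z, erealPosPart (Fc z) ∂P with hacdef
  set bc : ENNReal := ∫⁻ z, erealPosPart (-(Fc z)) ∂P with hbcdef
  set L : EReal := (A : EReal) - (B : EReal) with hLdef
  -- pointwise monotonicity facts
  have hFmono : ∀ z : E, ∀ {δ δ' : ℝ}, δ ≤ δ' → F δ z ≤ F δ' z := by
    intro z δ δ' h
    exact biSup_mono fun η' hη' => Metric.ball_subset_ball h hη'
  have hFc_le : ∀ z : E, ∀ {δ : ℝ}, δ ≤ δ₀ → F δ z ≤ Fc z := by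
    intro z δ h
    exact biSup_mono fun η' hη' =>
      (Metric.ball_subset_closedBall.trans (Metric.closedBall_subset_closedBall h)) hη'
  have hmF : ∀ {δ : ℝ}, 0 < δ → ∀ z : E, m η z ≤ F δ z := fun hδ z =>
    le_biSup (fun η' => m η' z) (Metric.mem_ball_self hδ)
  have hmFc : ∀ z : E, m η z ≤ Fc z := fun z =>
    le_biSup (fun η' => m η' z) (Metric.mem_closedBall_self hδ₀.le)
  -- integral monotonicity facts
  have ha_mono : ∀ {δ δ' : ℝ}, δ ≤ δ' → a δ ≤ a δ' := fun h =>
    lintegral_mono fun z => pp_mono (hFmono z h)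
  have hb_anti : ∀ {δ δ' : ℝ}, δ ≤ δ' → b δ' ≤ b δ := fun h =>
    lintegral_mono fun z => pp_mono (EReal.neg_le_neg_iff.2 (hFmono z h))
  have hAa : ∀ {δ : ℝ}, 0 < δ → A ≤ a δ := fun hδ =>
    lintegral_mono fun z => pp_mono (hmF hδ z)
  have hbB : ∀ {δ : ℝ}, 0 < δ → b δ ≤ B := fun hδ =>
    lintegral_mono fun z => pp_mono (EReal.neg_le_neg_iff.2 (hmF hδ z))
  have hac_le : ∀ {δ : ℝ}, δ ≤ δ₀ → a δ ≤ ac := fun h =>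
    lintegral_mono fun z => pp_mono (hFc_le z h)
  have hbc_le : ∀ {δ : ℝ}, δ ≤ δ₀ → bc ≤ b δ := fun h =>
    lintegral_mono fun z => pp_mono (EReal.neg_le_neg_iff.2 (hFc_le z h))
  have hAac : A ≤ ac := lintegral_mono fun z => pp_mono (hmFc z)
  have hbcB : bc ≤ B := lintegral_mono fun z => pp_mono (EReal.neg_le_neg_iff.2 (hmFc z))
  -- identification of the integrals
  have hg : ∀ δ : ℝ, erealIntegral P (fun z => ⨆ η' ∈ Metric.ball η δ, m η' z)
      = (a δ : EReal) - (b δ : EReal) := fun δ => rfl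
  have hgη : erealIntegral P (fun z => m η z) = (A : EReal) - (B : EReal) := rfl
  -- lower bound
  have hgL : ∀ {δ : ℝ}, 0 < δ → L ≤ (a δ : EReal) - (b δ : EReal) := fun hδ =>
    EReal.sub_le_sub (EReal.coe_ennreal_le_coe_ennreal_iff.2 (hAa hδ))
      (EReal.coe_ennreal_le_coe_ennreal_iff.2 (hbB hδ))
  have hgmono : ∀ {δ δ' : ℝ}, δ ≤ δ' →
      (a δ : EReal) - (b δ : EReal) ≤ (a δ' : EReal) - (b δ' : EReal) := fun h =>
    EReal.sub_le_sub (EReal.coe_ennreal_le_coe_ennreal_iff.2 (ha_mono h))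
      (EReal.coe_ennreal_le_coe_ennreal_iff.2 (hb_anti h))
  -- the shrinking sequence
  set δs : ℕ → ℝ := fun n => δ₀ / (n + 1) with hδsdef
  have hδspos : ∀ n, 0 < δs n := fun n => div_pos hδ₀ (by positivity)
  have hδsle : ∀ n, δs n ≤ δ₀ := fun n =>
    div_le_self hδ₀.le (by exact_mod_cast Nat.one_le_iff_ne_zero.2 (Nat.succ_ne_zero n))
  have hδsanti : Antitone δs := fun i j hij => by
    apply div_le_div_of_nonneg_left hδ₀.le (by positivity)
    exact_mod_cast Nat.succ_le_succ hij
  have hδs0 : Tendsto δs atTop (𝓝 0) := by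
    have h1 := tendsto_one_div_add_atTop_nhds_zero_nat.const_mul δ₀
    simpa [hδsdef, mul_one_div, div_eq_mul_inv] using h1
  -- a.e. pointwise convergence
  have hae : ∀ᵐ z ∂P, (⨅ n, F (δs n) z) = m η z := by
    filter_upwards [husc] with z hz
    refine le_antisymm ?_ (le_iInf fun n => hmF (hδspos n) z)
    refine le_of_forall_gt_imp_ge_of_dense fun y hy => ?_
    have hev := hz y hy
    rw [Metric.eventually_nhds_iff_ball] at hev
    obtain ⟨ε, hε, hball⟩ := hev
    obtain ⟨n, hn⟩ := (hδs0.eventually (gt_mem_nhds hε)).exists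
    refine le_trans (iInf_le _ n) (iSup₂_le fun η' hη' => ?_)
    exact (hball η' (Metric.ball_subset_ball hn.le hη')).le
  -- case analysis coming from `hint`
  have hcase : ac ≠ ⊤ ∨ bc = ⊤ := by
    by_contra hcon
    push_neg at hcon
    obtain ⟨h1, h2⟩ := hcon
    have hbceq : ((bc : ENNReal) : EReal) = ((bc.toReal : ℝ) : EReal) := by
      rw [← EReal.toReal_coe_ennreal (x := bc)]
      exact (EReal.coe_toReal (by simpa [EReal.coe_ennreal_eq_top_iff] using h2)
        (EReal.coe_ennreal_ne_bot bc)).symm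
    have : erealIntegral P (fun z => ⨆ η' ∈ Metric.closedBall η δ₀, m η' z) = ⊤ := by
      show ((ac : ENNReal) : EReal) - ((bc : ENNReal) : EReal) = ⊤
      rw [h1, EReal.coe_ennreal_top, hbceq, EReal.top_sub_coe]
    rw [this] at hint
    exact lt_irrefl _ hint
  -- convergence along the sequence
  have hseq : Tendsto (fun n => (a (δs n) : EReal) - (b (δs n) : EReal)) atTop (𝓝 L) := by
    rcases hcase with hac_ne | hbc_top
    · -- finite positive part case
      have hA_ne : A ≠ ⊤ := fun h => hac_ne (top_le_iff.1 (h ▸ hAac))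
      have haA : Tendsto (fun n => a (δs n)) atTop (𝓝 A) := by
        have hmeasn : ∀ n, Measurable fun z => erealPosPart (F (δs n) z) := fun n =>
          pp_meas.comp (hmeas _ (hδspos n))
        have hanti : Antitone fun n => fun z => erealPosPart (F (δs n) z) :=
          fun i j hij z => pp_mono (hFmono z (hδsanti hij))
        have hfin : ∫⁻ z, erealPosPart (F (δs 0) z) ∂P ≠ ⊤ :=
          fun h => hac_ne (top_le_iff.1 (h ▸ hac_le (hδsle 0)))
        have h1 := lintegral_iInf hmeasn hanti hfin
        have h2 : ∫⁻ z, (⨅ n, erealPosPart (F (δs n) z)) ∂P = A := by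
          refine lintegral_congr_ae ?_
          filter_upwards [hae] with z hz
          rw [← pp_iInf, hz]
        have heq : (⨅ n, a (δs n)) = A := h1.symm.trans h2
        have := tendsto_atTop_iInf (f := fun n => a (δs n))
          (fun i j hij => ha_mono (hδsanti hij))
        rwa [heq] at this
      have hbBt : Tendsto (fun n => b (δs n)) atTop (𝓝 B) := by
        have hmeasn : ∀ n, Measurable fun z => erealPosPart (-(F (δs n) z)) := fun n =>
          pp_meas.comp ((hmeas _ (hδspos n)).neg)
        have hmono : Monotone fun n => fun z => erealPosPart (-(F (δs n) z)) :=
          fun i j hij z => pp_mono (EReal.neg_le_neg_iff.2 (hFmono z (hδsanti hij)))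
        have h1 := lintegral_iSup (μ := P) hmeasn hmono
        have h2 : ∫⁻ z, (⨆ n, erealPosPart (-(F (δs n) z))) ∂P = B := by
          refine lintegral_congr_ae ?_
          filter_upwards [hae] with z hz
          rw [← pp_iSup, ereal_iSup_neg, hz]
        have heq : (⨆ n, b (δs n)) = B := h1.symm.trans h2
        have := tendsto_atTop_iSup (f := fun n => b (δs n))
          (fun i j hij => hb_anti (hδsanti hij))
        rwa [heq] at this
      have h1 : Tendsto (fun n => ((a (δs n) : ENNReal) : EReal)) atTop (𝓝 (A : EReal)) :=
        (continuous_coe_ennreal_ereal.tendsto A).comp haA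
      have h2 : Tendsto (fun n => ((b (δs n) : ENNReal) : EReal)) atTop (𝓝 (B : EReal)) :=
        (continuous_coe_ennreal_ereal.tendsto B).comp hbBt
      have h2' : Tendsto (fun n => -((b (δs n) : ENNReal) : EReal)) atTop (𝓝 (-(B : EReal))) :=
        h2.neg
      have hadd : ContinuousAt (fun p : EReal × EReal => p.1 + p.2) ((A : EReal), -(B : EReal)) := by
        refine EReal.continuousAt_add (Or.inl ?_) (Or.inl (EReal.coe_ennreal_ne_bot A))
        simpa [EReal.coe_ennreal_eq_top_iff] using hA_ne
      have hcomb := hadd.tendsto.comp (h1.prodMk_nhds h2')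
      rw [hLdef]
      simpa [sub_eq_add_neg, Function.comp_def] using hcomb
    · -- infinite negative part case
      have hBtop : B = ⊤ := top_le_iff.1 (hbc_top ▸ hbcB)
      have hbtop : ∀ n, b (δs n) = ⊤ := fun n =>
        top_le_iff.1 (hbc_top ▸ hbc_le (hδsle n))
      have hLbot : L = ⊥ := by
        rw [hLdef, hBtop, EReal.coe_ennreal_top, EReal.sub_top]
      have : ∀ n, (a (δs n) : EReal) - (b (δs n) : EReal) = ⊥ := fun n => by
        rw [hbtop n, EReal.coe_ennreal_top, EReal.sub_top]
      rw [hLbot]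
      simp only [this]
      exact (tendsto_const_nhds : Tendsto (fun _ : ℕ => (⊥ : EReal)) atTop (𝓝 ⊥))
  -- conclusion
  simp only [hg, hgη]
  rw [← hLdef]
  refine tendsto_order.2 ⟨fun c hc => ?_, fun c hc => ?_⟩
  · filter_upwards [self_mem_nhdsWithin] with δ hδ
    exact lt_of_lt_of_le hc (hgL hδ)
  · obtain ⟨n, hn⟩ := (hseq.eventually (gt_mem_nhds hc)).exists
    filter_upwards [Ioo_mem_nhdsGT_of_mem ⟨le_refl (0 : ℝ), hδspos n⟩] with δ hδ
    exact lt_of_le_of_lt (hgmono hδ.2.le) hn
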